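/- Let E be a real Banach space and let K be a convex subset of the dual space E* that is compact and metrizable in the weak* topology. Then K is the weak* closed convex hull of its weak* exposed points: K = the weak* closure of the convex hull of w*Exp(K). -/

import Mathlib

open Set
open scoped ENNReal NNReal Topology

set_option linter.unusedSectionVars false

section Aux

variable {E : Type*} [NormedAddCommGroup E] [NormedSpace ℝ E]

/-- Every continuous linear functional on the weak* dual is evaluation at a point. -/
lemma weakDual_eval_surj (l : WeakDual ℝ E →L[ℝ] ℝ) :
    ∃ x : E, ∀ p : WeakDual ℝ E, l p = p x := by
  have hp := LinearMap.weakBilin_withSeminorms (topDualPairing ℝ E)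
  have hq : Continuous ⇑(l.toLinearMap.toSeminorm) := by
    rw [LinearMap.coe_toSeminorm]
    exact continuous_norm.comp l.continuous
  obtain ⟨s, C, hC, hle⟩ := Seminorm.bound_of_continuous hp l.toLinearMap.toSeminorm hq
  let L : ↥s → (WeakDual ℝ E →ₗ[ℝ] ℝ) := fun y => (topDualPairing ℝ E).flip (y : E)
  have hker : ⨅ y : ↥s, LinearMap.ker (L y) ≤ LinearMap.ker l.toLinearMap := by
    intro p hp'
    simp only [Submodule.mem_iInf, LinearMap.mem_ker] at hp' ⊢
    have h0 : (s.sup (topDualPairing ℝ E).toSeminormFamily) p ≤ 0 := by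
      apply Seminorm.finset_sup_apply_le le_rfl
      intro y hy
      have h1 := hp' ⟨y, hy⟩
      simp only [L, LinearMap.flip_apply, topDualPairing_apply] at h1
      change ‖p y‖ ≤ 0
      rw [show (p : WeakDual ℝ E) y = 0 from h1]
      simp
    have h2 := hle p
    simp only [LinearMap.toSeminorm_apply] at h2
    have : ‖l p‖ ≤ 0 := le_trans h2 (by
      have : (C : ℝ) • (s.sup (topDualPairing ℝ E).toSeminormFamily) p ≤ (C : ℝ) • 0 := by
        apply smul_le_smul_of_nonneg_left h0 (by positivity)
      exact le_trans (le_of_eq rfl) (this.trans (le_of_eq (smul_zero _))))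
    simpa using le_antisymm this (norm_nonneg _)
  have hmem := mem_span_of_iInf_ker_le_ker hker
  obtain ⟨c, hc⟩ := (Submodule.mem_span_range_iff_exists_fun ℝ).1 hmem
  refine ⟨∑ i : ↥s, c i • (i : E), fun p => ?_⟩
  have h3 : l p = (∑ i : ↥s, c i • L i) p := by rw [hc]; rfl
  rw [h3]
  simp only [LinearMap.coe_sum, Finset.sum_apply, LinearMap.smul_apply, L,
    LinearMap.flip_apply, topDualPairing_apply, smul_eq_mul]
  rw [map_sum]
  simp only [map_smul, smul_eq_mul]
  rfl

variable {E : Type*} [NormedAddCommGroup E] [NormedSpace ℝ E]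

lemma weakDual_compact_bound [CompleteSpace E] {K : Set (WeakDual ℝ E)} (hK : IsCompact K) :
    ∃ M : ℝ, 0 < M ∧ ∀ p ∈ K, ∀ x : E, |p x| ≤ M * ‖x‖ := by
  rcases K.eq_empty_or_nonempty with rfl | hne
  · exact ⟨1, one_pos, by simp⟩
  · have hpt : ∀ x : E, ∃ C, ∀ p : ↥K, ‖WeakDual.toStrongDual (p : WeakDual ℝ E) x‖ ≤ C := by
      intro x
      obtain ⟨p₀, -, hp₀⟩ := hK.exists_isMaxOn hne
        ((continuous_norm.comp (WeakDual.eval_continuous x)).continuousOn)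
      exact ⟨‖(p₀ : WeakDual ℝ E) x‖, fun p => hp₀ p.2⟩
    obtain ⟨C', hC'⟩ := banach_steinhaus (g := fun p : ↥K =>
      WeakDual.toStrongDual (p : WeakDual ℝ E)) hpt
    refine ⟨max C' 1, lt_of_lt_of_le one_pos (le_max_right _ _), fun p hp x => ?_⟩
    calc |p x| = ‖WeakDual.toStrongDual p x‖ := rfl
      _ ≤ ‖WeakDual.toStrongDual p‖ * ‖x‖ := ContinuousLinearMap.le_opNorm _ _
      _ ≤ max C' 1 * ‖x‖ := by
          apply mul_le_mul_of_nonneg_right (le_trans (hC' ⟨p, hp⟩) (le_max_left _ _))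
            (norm_nonneg _)

section TVS

variable {W : Type*} [AddCommGroup W] [Module ℝ W] [TopologicalSpace W]
  [IsTopologicalAddGroup W] [ContinuousSMul ℝ W]

lemma isCompact_convexJoin_aux {s t : Set W} (hs : IsCompact s) (ht : IsCompact t) :
    IsCompact (convexJoin ℝ s t) := by
  have heq : convexJoin ℝ s t =
      (fun q : ℝ × W × W => q.1 • q.2.1 + (1 - q.1) • q.2.2) '' (Icc (0:ℝ) 1 ×ˢ s ×ˢ t) := by
    ext z
    rw [mem_convexJoin]
    constructor
    · rintro ⟨x, hx, y, hy, a, b, ha, hb, hab, rfl⟩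
      exact ⟨(a, x, y), ⟨⟨ha, by linarith⟩, hx, hy⟩, by simp [show (1:ℝ) - a = b by linarith]⟩
    · rintro ⟨⟨a, x, y⟩, ⟨⟨ha0, ha1⟩, hx, hy⟩, rfl⟩
      exact ⟨x, hx, y, hy, a, 1 - a, ha0, by linarith, by ring, rfl⟩
  rw [heq]
  exact ((isCompact_Icc.prod (hs.prod ht)).image
    ((continuous_fst.smul (continuous_snd.fst)).add
      ((continuous_const.sub continuous_fst).smul (continuous_snd.snd))))

lemma isCompact_convexHull_finite_union {ι : Type*} (s : Finset ι) (C : ι → Set W)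
    (hconv : ∀ i ∈ s, Convex ℝ (C i)) (hcomp : ∀ i ∈ s, IsCompact (C i)) :
    IsCompact (convexHull ℝ (⋃ i ∈ s, C i)) := by
  classical
  induction s using Finset.induction_on with
  | empty => simp
  | @insert a s ha ih =>
    rw [Finset.set_biUnion_insert]
    rcases (C a).eq_empty_or_nonempty with hCa | hCa
    · rw [hCa, empty_union]
      exact ih (fun i hi => hconv i (Finset.mem_insert_of_mem hi))
        (fun i hi => hcomp i (Finset.mem_insert_of_mem hi))
    rcases (⋃ i ∈ s, C i).eq_empty_or_nonempty with hU | hU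
    · rw [hU, union_empty, (hconv a (Finset.mem_insert_self _ _)).convexHull_eq]
      exact hcomp a (Finset.mem_insert_self _ _)
    · rw [convexHull_union hCa hU, (hconv a (Finset.mem_insert_self _ _)).convexHull_eq]
      exact isCompact_convexJoin_aux (hcomp a (Finset.mem_insert_self _ _))
        (ih (fun i hi => hconv i (Finset.mem_insert_of_mem hi))
          (fun i hi => hcomp i (Finset.mem_insert_of_mem hi)))

lemma extremePoint_of_mem_convexHull_union {K : Set W} (hK : Convex ℝ K) {p : W}
    (hp : p ∈ K.extremePoints ℝ) {ι : Type*} (s : Finset ι) (C : ι → Set W)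
    (hconv : ∀ i ∈ s, Convex ℝ (C i)) (hsub : ∀ i ∈ s, C i ⊆ K)
    (hmem : p ∈ convexHull ℝ (⋃ i ∈ s, C i)) : ∃ i ∈ s, p ∈ C i := by
  classical
  induction s using Finset.induction_on with
  | empty => simp at hmem
  | @insert a s ha ih =>
    rw [Finset.set_biUnion_insert] at hmem
    rcases (C a).eq_empty_or_nonempty with hCa | hCa
    · rw [hCa, empty_union] at hmem
      obtain ⟨i, hi, hpi⟩ := ih (fun i hi => hconv i (Finset.mem_insert_of_mem hi))
        (fun i hi => hsub i (Finset.mem_insert_of_mem hi)) hmem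
      exact ⟨i, Finset.mem_insert_of_mem hi, hpi⟩
    rcases (⋃ i ∈ s, C i).eq_empty_or_nonempty with hU | hU
    · rw [hU, union_empty, (hconv a (Finset.mem_insert_self _ _)).convexHull_eq] at hmem
      exact ⟨a, Finset.mem_insert_self _ _, hmem⟩
    rw [convexHull_union hCa hU, (hconv a (Finset.mem_insert_self _ _)).convexHull_eq,
      mem_convexJoin] at hmem
    obtain ⟨x, hx, y, hy, α, β, hα, hβ, hαβ, rfl⟩ := hmem
    have hxK : x ∈ K := hsub a (Finset.mem_insert_self _ _) hx
    have hyK : y ∈ K := convexHull_min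
      (iUnion₂_subset fun i hi => hsub i (Finset.mem_insert_of_mem hi)) hK hy
    rcases hα.eq_or_lt with h0 | h0
    · have : α • x + β • y = y := by
        rw [← h0, zero_smul, zero_add, show β = 1 by linarith, one_smul]
      have hy' : α • x + β • y ∈ convexHull ℝ (⋃ i ∈ s, C i) := by rw [this]; exact hy
      obtain ⟨i, hi, hpi⟩ := ih (fun i hi => hconv i (Finset.mem_insert_of_mem hi))
        (fun i hi => hsub i (Finset.mem_insert_of_mem hi)) hy'
      exact ⟨i, Finset.mem_insert_of_mem hi, hpi⟩
    rcases hβ.eq_or_lt with h1 | h1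
    · have : α • x + β • y = x := by
        rw [← h1, zero_smul, add_zero, show α = 1 by linarith, one_smul]
      rw [this]
      exact ⟨a, Finset.mem_insert_self _ _, hx⟩
    have := (hp.2 hxK hyK ⟨α, β, h0, h1, hαβ, rfl⟩)
    exact ⟨a, Finset.mem_insert_self _ _, this ▸ hx⟩

end TVS

instance weakDual_locallyConvex : LocallyConvexSpace ℝ (WeakDual ℝ E) :=
  WeakBilin.locallyConvexSpace

lemma choquet_slice {K : Set (WeakDual ℝ E)} (hconv : Convex ℝ K) (hcomp : IsCompact K)
    {p : WeakDual ℝ E} (hp : p ∈ K.extremePoints ℝ) {U : Set (WeakDual ℝ E)}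
    (hU : IsOpen U) (hpU : p ∈ U) :
    ∃ x : E, ∃ c : ℝ, c < p x ∧ ∀ q ∈ K, c < q x → q ∈ U := by
  classical
  set D := K \ U with hD
  have hDcomp : IsCompact D := hcomp.diff hU
  rcases D.eq_empty_or_nonempty with hDe | hDne
  · refine ⟨0, -1, by simp, fun q hq _ => ?_⟩
    by_contra h
    have hqD : q ∈ D := ⟨hq, h⟩
    rw [hDe] at hqD
    exact hqD
  -- for each q in D choose a separating vector
  have hqx : ∀ q ∈ D, ∃ x : E, q x ≠ p x := by
    intro q hq
    by_contra h
    push_neg at h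
    have : q = p := by
      apply ContinuousLinearMap.ext
      exact h
    exact hq.2 (this ▸ hpU)
  choose! xx hxx using hqx
  -- neighborhoods and compact convex pieces
  let V : WeakDual ℝ E → Set (WeakDual ℝ E) := fun q =>
    {r | |r (xx q) - q (xx q)| < |p (xx q) - q (xx q)| / 2}
  let Cq : WeakDual ℝ E → Set (WeakDual ℝ E) := fun q =>
    K ∩ {r | |r (xx q) - q (xx q)| ≤ |p (xx q) - q (xx q)| / 2}
  have hVopen : ∀ q, IsOpen (V q) := by
    intro q
    have : Continuous fun r : WeakDual ℝ E => |r (xx q) - q (xx q)| :=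
      ((WeakDual.eval_continuous (xx q)).sub continuous_const).abs
    exact isOpen_lt this continuous_const
  have hVq : ∀ q ∈ D, q ∈ V q := by
    intro q hq
    have : (0:ℝ) < |p (xx q) - q (xx q)| := by
      rw [abs_pos, sub_ne_zero]
      exact (hxx q hq).symm
    simp only [V, mem_setOf_eq, sub_self, abs_zero]
    linarith
  have hCconv : ∀ q, Convex ℝ (Cq q) := by
    intro q
    apply hconv.inter
    have : {r : WeakDual ℝ E | |r (xx q) - q (xx q)| ≤ |p (xx q) - q (xx q)| / 2} =
        ((topDualPairing ℝ E).flip (xx q)) ⁻¹'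
          (Icc (q (xx q) - |p (xx q) - q (xx q)| / 2) (q (xx q) + |p (xx q) - q (xx q)| / 2)) := by
      ext r
      change _ ↔ r (xx q) ∈ Icc _ _
      simp only [mem_setOf_eq, mem_preimage, LinearMap.flip_apply, topDualPairing_apply, mem_Icc]
      rw [abs_sub_le_iff]
      constructor <;> intro h <;> constructor <;> linarith [h.1, h.2]
    rw [this]
    exact (convex_Icc _ _).linear_preimage _
  have hCcomp : ∀ q, IsCompact (Cq q) := by
    intro q
    apply hcomp.inter_right
    have : Continuous fun r : WeakDual ℝ E => |r (xx q) - q (xx q)| :=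
      ((WeakDual.eval_continuous (xx q)).sub continuous_const).abs
    exact isClosed_le this continuous_const
  have hCsub : ∀ q, Cq q ⊆ K := fun q => inter_subset_left
  have hpC : ∀ q ∈ D, p ∉ Cq q := by
    intro q hq hpc
    have h1 : |p (xx q) - q (xx q)| ≤ |p (xx q) - q (xx q)| / 2 := hpc.2
    have h2 : (0:ℝ) < |p (xx q) - q (xx q)| := by
      rw [abs_pos, sub_ne_zero]; exact fun h => (hxx q hq) h.symm
    linarith
  -- finite subcover
  obtain ⟨b, hbD, hbfin, hbcov⟩ := hDcomp.elim_finite_subcover_image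
    (fun q (_ : q ∈ D) => hVopen q) (fun q hq => mem_biUnion hq (hVq q hq))
  let t : Finset (WeakDual ℝ E) := hbfin.toFinset
  have hmemt : ∀ q, q ∈ t ↔ q ∈ b := fun q => hbfin.mem_toFinset
  -- D is contained in the union of the Cq, q ∈ t
  have hDsub : D ⊆ ⋃ q ∈ t, Cq q := by
    intro r hr
    obtain ⟨q, hq, hrV⟩ := mem_iUnion₂.1 (hbcov hr)
    refine mem_biUnion ((hmemt q).2 hq) ⟨hr.1, ?_⟩
    exact le_of_lt (show |r (xx q) - q (xx q)| < |p (xx q) - q (xx q)| / 2 from hrV)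
  set H := convexHull ℝ (⋃ q ∈ t, Cq q) with hH
  have hHcomp : IsCompact H := isCompact_convexHull_finite_union t Cq
    (fun i _ => hCconv i) (fun i _ => hCcomp i)
  have hpH : p ∉ H := by
    intro hmem
    obtain ⟨q, hqt, hpq⟩ := extremePoint_of_mem_convexHull_union hconv hp t Cq
      (fun i _ => hCconv i) (fun i _ => hCsub i) hmem
    exact hpC q (hbD ((hmemt q).1 hqt)) hpq
  have hsub2 : closure (convexHull ℝ D) ⊆ H := by
    apply closure_minimal _ hHcomp.isClosed
    exact convexHull_min (hDsub.trans (subset_convexHull ℝ _)) (convex_convexHull ℝ _)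
  have hpcl : p ∉ closure (convexHull ℝ D) := fun h => hpH (hsub2 h)
  obtain ⟨l, u, hl1, hl2⟩ := geometric_hahn_banach_closed_point
    ((convex_convexHull ℝ D).closure) isClosed_closure hpcl
  obtain ⟨x₀, hx₀⟩ := weakDual_eval_surj l
  refine ⟨x₀, u, by rw [← hx₀]; exact hl2, fun q hq hqu => ?_⟩
  by_contra h
  have hqD : q ∈ D := ⟨hq, h⟩
  have := hl1 q (subset_closure (subset_convexHull ℝ D hqD))
  rw [hx₀] at this
  linarith

end Aux

/-- Let `E` be a real Banach space and `K` a convex, weak* compact, weak* metrizable subset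
of `E*`. Then `K` is the weak* closed convex hull of its weak* exposed points. -/
theorem stmt_9 {E : Type*} [NormedAddCommGroup E] [NormedSpace ℝ E] [CompleteSpace E]
    (K : Set (WeakDual ℝ E)) (hconv : Convex ℝ K) (hcomp : IsCompact K)
    (hmetr : TopologicalSpace.MetrizableSpace K) :
    K = closure (convexHull ℝ
      {p ∈ K | ∃ x : E, ∀ q ∈ K, q ≠ p → q x < p x}) := by
  classical
  rcases K.eq_empty_or_nonempty with rfl | hKne
  · simp
  obtain ⟨M, hM, hMb⟩ := weakDual_compact_bound hcomp
  letI : MetricSpace ↥K := TopologicalSpace.metrizableSpaceMetric ↥K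
  set D := {p ∈ K | ∃ x : E, ∀ q ∈ K, q ≠ p → q x < p x} with hDdef
  -- the support function
  set Φ : E → ℝ := fun x => sSup ((fun p : WeakDual ℝ E => p x) '' K) with hΦ
  have hbdd : ∀ x : E, BddAbove ((fun p : WeakDual ℝ E => p x) '' K) :=
    fun x => (hcomp.image (WeakDual.eval_continuous x)).bddAbove
  have hΦge : ∀ x : E, ∀ p ∈ K, p x ≤ Φ x := fun x p hp => le_csSup (hbdd x) ⟨p, hp, rfl⟩
  have hΦmem : ∀ x : E, ∃ p ∈ K, p x = Φ x := by
    intro x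
    have h := (hcomp.image (WeakDual.eval_continuous x)).sSup_mem (hKne.image _)
    obtain ⟨p, hp, hpx⟩ := h
    exact ⟨p, hp, hpx⟩
  have hlipp : ∀ p ∈ K, ∀ x y : E, p x ≤ p y + M * ‖x - y‖ := by
    intro p hp x y
    have h1 : p x - p y ≤ |p (x - y)| := by
      rw [map_sub]; exact le_abs_self _
    have h2 := hMb p hp (x - y)
    linarith
  have hΦlip : ∀ x y : E, Φ x ≤ Φ y + M * ‖x - y‖ := by
    intro x y
    apply csSup_le (hKne.image _)
    rintro _ ⟨p, hp, rfl⟩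
    have := hΦge y p hp
    have := hlipp p hp x y
    linarith
  -- slices, as subsets of the metric space ↥K
  set T : E → ℝ → Set ↥K := fun x δ => {p : ↥K | Φ x - δ < (p : WeakDual ℝ E) x} with hT
  set G : ℕ → Set E := fun n => {x | ∃ δ > 0, EMetric.diam (T x δ) ≤ ((n : ℝ≥0∞))⁻¹} with hG
  -- openness
  have hopen : ∀ n, IsOpen (G n) := by
    intro n
    rw [Metric.isOpen_iff]
    rintro x ⟨δ, hδ, hdiam⟩
    refine ⟨δ / (4 * (M + 1)), by positivity, fun y hy => ⟨δ / 2, by positivity, ?_⟩⟩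
    refine le_trans (EMetric.diam_mono ?_) hdiam
    intro p hpT
    have h1 : Φ y - δ / 2 < (p : WeakDual ℝ E) y := hpT
    have h2 := hlipp (p : WeakDual ℝ E) p.2 y x
    have h3 := hΦlip x y
    have h4 : dist y x < δ / (4 * (M + 1)) := hy
    rw [dist_eq_norm] at h4
    have h5 : ‖x - y‖ = ‖y - x‖ := norm_sub_rev _ _
    have h6 : M * ‖y - x‖ < (M + 1) * (δ / (4 * (M + 1))) := by
      have : M * ‖y - x‖ ≤ M * (δ / (4 * (M + 1))) :=
        mul_le_mul_of_nonneg_left (le_of_lt h4) (le_of_lt hM)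
      have : M * (δ / (4 * (M + 1))) < (M + 1) * (δ / (4 * (M + 1))) := by
        apply mul_lt_mul_of_pos_right (by linarith) (by positivity)
      linarith [mul_le_mul_of_nonneg_left (le_of_lt h4) (le_of_lt hM)]
    have h7 : (M + 1) * (δ / (4 * (M + 1))) = δ / 4 := by field_simp
    show Φ x - δ < (p : WeakDual ℝ E) x
    rw [h7] at h6
    rw [h5] at h3
    linarith
  -- density
  have hdense : ∀ n, Dense (G n) := by
    intro n
    rcases Nat.eq_zero_or_pos n with rfl | hn
    · have : G 0 = univ := eq_univ_of_forall fun x => ⟨1, one_pos, by simp⟩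
      rw [this]; exact dense_univ
    rw [Metric.dense_iff]
    intro x ε hε
    -- the face of maximizers of x
    set F : Set (WeakDual ℝ E) := {p ∈ K | ∀ q ∈ K, q x ≤ p x} with hF
    have hFeq : F = K ∩ {p : WeakDual ℝ E | p x = Φ x} := by
      ext p
      simp only [hF, mem_inter_iff, mem_setOf_eq, mem_sep_iff]
      constructor
      · rintro ⟨hpK, hmax⟩
        exact ⟨hpK, le_antisymm (hΦge x p hpK) (csSup_le (hKne.image _)
          (by rintro _ ⟨q, hq, rfl⟩; exact hmax q hq))⟩
      · rintro ⟨hpK, hpx⟩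
        exact ⟨hpK, fun q hq => hpx ▸ hΦge x q hq⟩
    have hFne : F.Nonempty := by
      obtain ⟨p, hp, hpx⟩ := hΦmem x
      rw [hFeq]; exact ⟨p, hp, hpx⟩
    have hFexp : IsExposed ℝ K F := fun _ =>
      ⟨⟨(topDualPairing ℝ E).flip x, WeakDual.eval_continuous x⟩, rfl⟩
    have hFcomp : IsCompact F := by
      rw [hFeq]
      exact hcomp.inter_right (isClosed_eq (WeakDual.eval_continuous x) continuous_const)
    have hFconv : Convex ℝ F := by
      rw [hFeq]
      exact hconv.inter (convex_singleton (Φ x) |>.linear_preimage ((topDualPairing ℝ E).flip x))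
    obtain ⟨p₀, hp₀F⟩ := hFcomp.extremePoints_nonempty hFne
    have hp₀K : p₀ ∈ K.extremePoints ℝ :=
      hFexp.isExtreme.extremePoints_subset_extremePoints hp₀F
    have hp₀KF : p₀ ∈ F := extremePoints_subset hp₀F
    have hp₀mem : p₀ ∈ K := (hFeq ▸ hp₀KF).1
    have hp₀max : p₀ x = Φ x := (hFeq ▸ hp₀KF).2
    -- a small ball around p₀ in the metric on K, coming from an ambient open set
    set p₀' : ↥K := ⟨p₀, hp₀mem⟩ with hp₀'
    set r : ℝ≥0∞ := (((2 * n : ℕ) : ℝ≥0∞))⁻¹ with hr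
    have hr0 : 0 < r := by
      rw [hr]
      simp only [ENNReal.inv_pos]
      exact ENNReal.natCast_ne_top _
    have hball : IsOpen (EMetric.ball p₀' r) := EMetric.isOpen_ball
    obtain ⟨V, hVopen, hVeq⟩ := isOpen_induced_iff.mp hball
    have hp₀V : p₀ ∈ V := by
      have : p₀' ∈ EMetric.ball p₀' r := EMetric.mem_ball_self hr0
      rw [← hVeq] at this
      exact this
    obtain ⟨z, c, hzc, hslice⟩ := choquet_slice hconv hcomp hp₀K hVopen hp₀V
    set η : ℝ := p₀ z - c with hη
    have hη0 : 0 < η := by simp [hη]; linarith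
    set τ : ℝ := ε / (2 * (‖z‖ + 1)) with hτ
    have hτ0 : 0 < τ := by positivity
    set y : E := x + τ • z with hy
    refine ⟨y, ?_, ⟨τ * η, by positivity, ?_⟩⟩
    · rw [Metric.mem_ball, dist_eq_norm]
      have : ‖y - x‖ = τ * ‖z‖ := by
        rw [hy]; simp [norm_smul, abs_of_pos hτ0]
      rw [this, hτ]
      rw [div_mul_eq_mul_div, div_lt_iff₀ (by positivity)]
      nlinarith [norm_nonneg z]
    · -- diam of slice T y (τη) is small
      have hsub : T y (τ * η) ⊆ EMetric.ball p₀' r := by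
        intro p hpT
        have h1 : Φ y - τ * η < (p : WeakDual ℝ E) y := hpT
        have h2 : p₀ y ≤ Φ y := hΦge y p₀ hp₀mem
        have h3 : (p : WeakDual ℝ E) x ≤ Φ x := hΦge x _ p.2
        have h4 : (p : WeakDual ℝ E) y
            = (p : WeakDual ℝ E) x + τ * (p : WeakDual ℝ E) z := by
          rw [hy, map_add, map_smul]; simp
        have h5 : p₀ y = p₀ x + τ * p₀ z := by
          rw [hy, map_add, map_smul]; simp
        rw [h4] at h1
        have h6 : τ * (p₀ z - η) < τ * ((p : WeakDual ℝ E) z) := by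
          have e1 : τ * (p₀ z - η) = τ * p₀ z - τ * η := by ring
          linarith [h1, h2, h3, h5, hp₀max]
        have h7 : c < (p : WeakDual ℝ E) z := by
          have h6' := (mul_lt_mul_iff_right₀ hτ0).mp h6
          have hην : η = p₀ z - c := hη
          linarith
        have h8 : (p : WeakDual ℝ E) ∈ V := hslice _ p.2 h7
        have : p ∈ Subtype.val ⁻¹' V := h8
        rw [hVeq] at this
        exact this
      refine le_trans (EMetric.diam_mono hsub) (le_trans EMetric.diam_ball ?_)
      rw [hr]
      push_cast
      rw [ENNReal.mul_inv (by simp) (by simp)]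
      rw [← mul_assoc, ENNReal.mul_inv_cancel (by norm_num) (by norm_num), one_mul]
  -- Baire
  have hGdense : Dense (⋂ n, G n) := dense_iInter_of_isOpen hopen hdense
  -- points of ⋂ G n expose
  have hexp : ∀ y ∈ ⋂ n, G n, ∃ p ∈ K, (∀ q ∈ K, q ≠ p → q y < p y) ∧ p y = Φ y := by
    intro y hyG
    set Mx : Set ↥K := {p : ↥K | (p : WeakDual ℝ E) y = Φ y} with hMx
    have hMxsub : ∀ δ : ℝ, 0 < δ → Mx ⊆ T y δ := by
      intro δ hδ p hp
      show Φ y - δ < (p : WeakDual ℝ E) y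
      rw [hp]; linarith
    have hMxdiam : EMetric.diam Mx = 0 := by
      by_contra h
      obtain ⟨n, hn⟩ := ENNReal.exists_inv_nat_lt h
      obtain ⟨δ, hδ, hdiam⟩ := mem_iInter.mp hyG n
      exact absurd (le_trans (EMetric.diam_mono (hMxsub δ hδ)) hdiam) (not_le.mpr hn)
    have hMxsing : Mx.Subsingleton := EMetric.diam_eq_zero_iff.mp hMxdiam
    obtain ⟨p, hpK, hpy⟩ := hΦmem y
    refine ⟨p, hpK, fun q hq hqp => ?_, hpy⟩
    rcases lt_or_eq_of_le (hΦge y q hq) with h | h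
    · rw [hpy]; exact h
    · exact absurd (congrArg Subtype.val
        (hMxsing (show (⟨q, hq⟩ : ↥K) ∈ Mx from h) (show (⟨p, hpK⟩ : ↥K) ∈ Mx from hpy))) hqp
  -- conclusion
  apply Subset.antisymm ?_
    (closure_minimal (convexHull_min (fun p hp => hp.1) hconv) hcomp.isClosed)
  intro w hw
  by_contra hwC
  obtain ⟨l, u, hl1, hl2⟩ := geometric_hahn_banach_closed_point
    ((convex_convexHull ℝ D).closure) isClosed_closure hwC
  obtain ⟨x₀, hx₀⟩ := weakDual_eval_surj l
  have hg : 0 < Φ x₀ - u := by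
    have h1 := hΦge x₀ w hw
    rw [hx₀] at hl2
    linarith
  set g : ℝ := Φ x₀ - u with hgdef
  obtain ⟨y, hyG, hyd⟩ := hGdense.exists_dist_lt x₀ (show 0 < g / (2 * (M + 1)) by positivity)
  obtain ⟨p, hpK, hpexp, hpmax⟩ := hexp y hyG
  have hpD : p ∈ D := ⟨hpK, y, hpexp⟩
  have hpu : p x₀ < u := by
    have := hl1 p (subset_closure (subset_convexHull ℝ D hpD))
    rwa [hx₀] at this
  have c1 : Φ x₀ ≤ Φ y + M * ‖x₀ - y‖ := hΦlip x₀ y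
  have c3 : p y ≤ p x₀ + M * ‖y - x₀‖ := hlipp p hpK y x₀
  rw [dist_eq_norm] at hyd
  have h5 : ‖y - x₀‖ = ‖x₀ - y‖ := norm_sub_rev _ _
  have hMr : M * ‖x₀ - y‖ < (M + 1) * (g / (2 * (M + 1))) := by
    calc M * ‖x₀ - y‖ ≤ M * (g / (2 * (M + 1))) :=
          mul_le_mul_of_nonneg_left (le_of_lt hyd) (le_of_lt hM)
      _ < (M + 1) * (g / (2 * (M + 1))) :=
          mul_lt_mul_of_pos_right (by linarith) (by positivity)
  have h7 : (M + 1) * (g / (2 * (M + 1))) = g / 2 := by field_simp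
  rw [h7] at hMr
  rw [h5] at c3
  linarith [hpmax ▸ c1]
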